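/- For every odd integer k ≥ 3, neither the degree sequence (k, 3^k) nor the degree sequence (k^2, 3^{k-1}) (i.e., (k, k, 3, ..., 3) with k−1 threes) has a Z_3-connected realization. -/

import Mathlib

open Finset


lemma z3_three : ∀ a b c : ZMod 3, a ≠ 0 → b ≠ 0 → c ≠ 0 →
    a + b + c = 0 → a = b ∧ a = c := by decide

lemma z3_cases : ∀ a : ZMod 3, a ≠ 0 → a = 1 ∨ a = 2 := by decide

lemma z3_self_neg : ∀ a : ZMod 3, a = -a → a = 0 := by decide

lemma hub_adj {n : ℕ} (G : SimpleGraph (Fin (n + 1))) [DecidableRel G.Adj] (u : Fin (n + 1))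
    (hd : G.degree u = n) : ∀ x, x ≠ u → G.Adj u x := by
  have hsub : G.neighborFinset u ⊆ univ.erase u := by
    intro x hx
    rw [SimpleGraph.mem_neighborFinset] at hx
    exact mem_erase.mpr ⟨hx.ne', mem_univ x⟩
  have hcard : (univ.erase u).card ≤ (G.neighborFinset u).card := by
    rw [card_erase_of_mem (mem_univ u), card_univ, Fintype.card_fin,
      SimpleGraph.card_neighborFinset_eq_degree, hd]
    omega
  have heq := Finset.eq_of_subset_of_card_le hsub hcard
  intro x hx
  have : x ∈ G.neighborFinset u := by
    rw [heq]; exact mem_erase.mpr ⟨hx, mem_univ x⟩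
  rwa [SimpleGraph.mem_neighborFinset] at this

lemma deg3_common {n : ℕ} (G : SimpleGraph (Fin n)) [DecidableRel G.Adj]
    (f : Fin n → Fin n → ZMod 3)
    (hne : ∀ v w, G.Adj v w → f v w ≠ 0)
    (hzero : ∀ v w, ¬ G.Adj v w → f v w = 0) (w : Fin n)
    (hd : G.degree w = 3) (hs : ∑ x, f w x = 0) :
    ∀ x y, G.Adj w x → G.Adj w y → f w x = f w y := by
  have hsum : ∑ x ∈ G.neighborFinset w, f w x = 0 := by
    rw [← hs]
    apply Finset.sum_subset (subset_univ _)
    intro x _ hx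
    exact hzero w x (fun h => hx ((SimpleGraph.mem_neighborFinset G w x).mpr h))
  obtain ⟨a, b, c, hab, hac, hbc, hset⟩ := Finset.card_eq_three.mp hd
  have hA : G.Adj w a := by
    rw [← SimpleGraph.mem_neighborFinset, hset]; simp
  have hB : G.Adj w b := by
    rw [← SimpleGraph.mem_neighborFinset, hset]; simp
  have hC : G.Adj w c := by
    rw [← SimpleGraph.mem_neighborFinset, hset]; simp
  rw [hset, Finset.sum_insert (by simp [hab, hac]), Finset.sum_pair hbc] at hsum
  obtain ⟨h1, h2⟩ := z3_three _ _ _ (hne w a hA) (hne w b hB) (hne w c hC) (by linear_combination hsum)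
  have hval : ∀ z, G.Adj w z → f w z = f w a := by
    intro z hz
    have : z ∈ ({a, b, c} : Finset (Fin n)) := by
      rw [← hset, SimpleGraph.mem_neighborFinset]; exact hz
    simp only [mem_insert, mem_singleton] at this
    rcases this with rfl | rfl | rfl
    · rfl
    · exact h1.symm
    · exact h2.symm
  intro x y hx hy
  rw [hval x hx, hval y hy]


/-- A simple graph `G` is `A`-connected: for every zero-sum function `b` on vertices
there is an orientation together with a nowhere-zero `A`-valued edge labeling whose
boundary is `b`; this is encoded by a skew-symmetric function `f : V → V → A` which
is nonzero exactly on adjacent pairs. -/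
def SimpleGraph.AConnS {V : Type} [Fintype V] (A : Type) [AddCommGroup A]
    (G : SimpleGraph V) : Prop :=
  ∀ b : V → A, ∑ v, b v = 0 →
    ∃ f : V → V → A, (∀ v w, f v w = - f w v) ∧
      (∀ v w, G.Adj v w → f v w ≠ 0) ∧
      (∀ v w, ¬ G.Adj v w → f v w = 0) ∧
      ∀ v, ∑ w, f v w = b v

/-- `Z₃`-connectivity of a simple graph. -/
abbrev SimpleGraph.Z3Conn {V : Type} [Fintype V] (G : SimpleGraph V) : Prop :=
  G.AConnS (ZMod 3)

/-- `d` is the degree sequence of `G` (up to permutation of the entries). -/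
def degSeq {n : ℕ} (G : SimpleGraph (Fin n)) (d : Fin n → ℕ) : Prop :=
  ∃ σ : Equiv.Perm (Fin n), ∀ i, (G.neighborSet (σ i)).ncard = d i

/-- `d` is graphic: it is realized by some simple graph. -/
def Graphic {n : ℕ} (d : Fin n → ℕ) : Prop :=
  ∃ G : SimpleGraph (Fin n), degSeq G d


theorem no_Z3_realization_k_3k' (k : ℕ) (hk : 3 ≤ k) (hodd : Odd k)
    (G : SimpleGraph (Fin (k + 1))) [DecidableRel G.Adj] : ¬ (
        (∃ σ : Equiv.Perm (Fin (k+1)), ∀ i, G.degree (σ i) = if (i : ℕ) = 0 then k else 3)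
        ∧ G.Z3Conn) := by
  rintro ⟨⟨σ, hdeg⟩, hZ⟩
  set u := σ 0 with hu
  have hdu : G.degree u = k := by simpa using hdeg 0
  have hd3 : ∀ w, w ≠ u → G.degree w = 3 := by
    intro w hw
    have h := hdeg (σ.symm w)
    rw [Equiv.apply_symm_apply] at h
    rw [if_neg] at h
    · exact h
    · intro h0
      apply hw
      rw [hu, show (0 : Fin (k+1)) = σ.symm w from (Fin.ext (by simpa using h0)).symm,
        Equiv.apply_symm_apply]
  have hub : ∀ x, x ≠ u → G.Adj u x := hub_adj G u hdu
  obtain ⟨f, hskew, hne, hzero, hsum⟩ := hZ 0 (by simp)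
  have hcv : ∀ w, w ≠ u → ∀ x y, G.Adj w x → G.Adj w y → f w x = f w y := by
    intro w hw
    exact deg3_common G f hne hzero w (hd3 w hw) (by simpa using hsum w)
  set N : Finset (Fin (k+1)) := univ.erase u with hN
  set t : Fin (k+1) → ℤ := fun w => if f w u = 1 then 1 else -1 with ht
  have hopp : ∀ w ∈ N, ∀ w' ∈ N, G.Adj w w' → t w' = -t w := by
    intro w hw w' hw' hadj
    have hwu := (mem_erase.mp hw).1
    have hwu' := (mem_erase.mp hw').1
    have h1 : f w w' = f w u := hcv w hwu w' u hadj (hub w hwu).symm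
    have h2 : f w' w = f w' u := hcv w' hwu' w u hadj.symm (hub w' hwu').symm
    have h3 : f w' u = -(f w u) := by
      rw [← h2, ← h1]; exact hskew w' w
    have hnz : f w u ≠ 0 := hne w u (hub w hwu).symm
    rcases z3_cases _ hnz with h | h
    · have hx : f w' u = 2 := by rw [h3, h]; decide
      have e1 : t w = 1 := by simp [ht, h]
      have e2 : t w' = -1 := by simp [ht, hx, show (2 : ZMod 3) ≠ 1 by decide]
      rw [e1, e2]
    · have hx : f w' u = 1 := by rw [h3, h]; decide
      have e1 : t w = -1 := by simp [ht, h, show (2 : ZMod 3) ≠ 1 by decide]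
      have e2 : t w' = 1 := by simp [ht, hx]
      rw [e1, e2]; norm_num
  have hcard2 : ∀ w ∈ N, (N.filter (G.Adj w)).card = 2 := by
    intro w hw
    have hwu := (mem_erase.mp hw).1
    have hfe : N.filter (G.Adj w) = (G.neighborFinset w).erase u := by
      ext x
      simp only [hN, mem_filter, mem_erase, mem_univ, true_and,
        SimpleGraph.mem_neighborFinset, and_true]
    rw [hfe, card_erase_of_mem (by
      rw [SimpleGraph.mem_neighborFinset]; exact (hub w hwu).symm),
      SimpleGraph.card_neighborFinset_eq_degree, hd3 w hwu]
  have key : ∑ w ∈ N, ∑ w' ∈ N, (if G.Adj w w' then t w' else 0)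
      = -(2 * ∑ w ∈ N, t w) := by
    have h1 : ∀ w ∈ N, ∑ w' ∈ N, (if G.Adj w w' then t w' else 0) = -(2 * t w) := by
      intro w hw
      rw [← Finset.sum_filter]
      rw [Finset.sum_congr rfl (fun w' hw' =>
        hopp w hw w' (mem_filter.mp hw').1 (mem_filter.mp hw').2),
        Finset.sum_const, hcard2 w hw]
      push_cast; ring
    rw [Finset.sum_congr rfl h1, Finset.mul_sum]
    simp
  have key2 : ∑ w ∈ N, ∑ w' ∈ N, (if G.Adj w w' then t w' else 0)
      = 2 * ∑ w ∈ N, t w := by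
    rw [Finset.sum_comm]
    have h1 : ∀ w' ∈ N, ∑ w ∈ N, (if G.Adj w w' then t w' else 0) = 2 * t w' := by
      intro w' hw'
      rw [← Finset.sum_filter]
      have hfil : N.filter (fun w => G.Adj w w') = N.filter (G.Adj w') := by
        apply Finset.filter_congr
        intro x _
        simp [SimpleGraph.adj_comm]
      rw [hfil, Finset.sum_const, hcard2 w' hw']
      push_cast; ring
    rw [Finset.sum_congr rfl h1, Finset.mul_sum]
  have hS0 : ∑ w ∈ N, t w = 0 := by
    have := key.symm.trans key2
    linarith
  have hcast : ((∑ w ∈ N, t w : ℤ) : ZMod 2) = 1 := by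
    push_cast
    have h1 : ∀ w ∈ N, ((t w : ZMod 2)) = 1 := by
      intro w _
      by_cases h : f w u = 1 <;> simp [ht, h] <;> decide
    rw [Finset.sum_congr rfl h1, Finset.sum_const, hN,
      card_erase_of_mem (mem_univ u), card_univ, Fintype.card_fin]
    have : k + 1 - 1 = k := by omega
    rw [this, nsmul_eq_mul, mul_one, ← ZMod.natCast_mod, Nat.odd_iff.mp hodd]
    rfl
  rw [hS0] at hcast
  exact absurd hcast (by decide)

theorem no_Z3_part2 (k : ℕ) (hk : 3 ≤ k) (hodd : Odd k)
    (G : SimpleGraph (Fin (k + 1))) [DecidableRel G.Adj] : ¬ (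
        (∃ σ : Equiv.Perm (Fin (k+1)), ∀ i, G.degree (σ i) = if (i : ℕ) < 2 then k else 3)
        ∧ G.Z3Conn) := by
  rintro ⟨⟨σ, hdeg⟩, hZ⟩
  have hval1 : ((1 : Fin (k+1)) : ℕ) = 1 := by
    rw [Fin.val_one']; exact Nat.mod_eq_of_lt (by omega)
  set u := σ 0 with hu
  set v := σ 1 with hv
  have huv : u ≠ v := fun h => by
    have := σ.injective h
    rw [← Fin.val_eq_val, hval1] at this
    simp at this
  have hdu : G.degree u = k := by simpa using hdeg 0
  have hdv : G.degree v = k := by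
    have := hdeg 1
    rwa [hval1, if_pos (by omega)] at this
  have hd3 : ∀ w, w ≠ u → w ≠ v → G.degree w = 3 := by
    intro w hwu hwv
    have h := hdeg (σ.symm w)
    rw [Equiv.apply_symm_apply] at h
    rw [if_neg] at h
    · exact h
    · intro h0
      interval_cases h1 : ((σ.symm w : Fin (k+1)) : ℕ)
      · exact hwu (by rw [hu, show (0 : Fin (k+1)) = σ.symm w from (Fin.ext (by simpa using h1.symm)),
          Equiv.apply_symm_apply])
      · exact hwv (by rw [hv, show (1 : Fin (k+1)) = σ.symm w from (Fin.ext (by rw [hval1]; omega)),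
          Equiv.apply_symm_apply])
  have hubu : ∀ x, x ≠ u → G.Adj u x := hub_adj G u hdu
  have hubv : ∀ x, x ≠ v → G.Adj v x := hub_adj G v hdv
  obtain ⟨f, hskew, hne, hzero, hsum⟩ := hZ 0 (by simp)
  have hcv : ∀ w, w ≠ u → w ≠ v → f w u = f w v := by
    intro w hwu hwv
    exact deg3_common G f hne hzero w (hd3 w hwu hwv) (by simpa using hsum w)
      u v (hubu w hwu).symm (hubv w hwv).symm
  set N : Finset (Fin (k+1)) := univ \ {u, v} with hN
  have hsplit : ∀ a : Fin (k+1), ∑ x ∈ N, f a x + (f a u + f a v) = 0 := by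
    intro a
    have h0 : ∑ x ∈ N, f a x + ∑ x ∈ ({u, v} : Finset (Fin (k+1))), f a x
        = ∑ x, f a x := Finset.sum_sdiff (subset_univ _)
    rw [Finset.sum_pair huv] at h0
    rw [h0]; simpa using hsum a
  have hNu : ∀ x ∈ N, x ≠ u := by
    intro x hx
    simp only [hN, mem_sdiff, mem_insert, mem_singleton] at hx
    tauto
  have hNv : ∀ x ∈ N, x ≠ v := by
    intro x hx
    simp only [hN, mem_sdiff, mem_insert, mem_singleton] at hx
    tauto
  have huu : f u u = 0 := hzero u u (G.loopless.irrefl u)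
  have hvv : f v v = 0 := hzero v v (G.loopless.irrefl v)
  have hEu : f u v = ∑ x ∈ N, f x u := by
    have := hsplit u
    rw [huu] at this
    have h2 : ∑ x ∈ N, f u x = -∑ x ∈ N, f x u := by
      rw [← Finset.sum_neg_distrib]
      exact Finset.sum_congr rfl (fun x _ => hskew u x)
    rw [h2] at this
    linear_combination this
  have hEv : f v u = ∑ x ∈ N, f x u := by
    have := hsplit v
    rw [hvv] at this
    have h2 : ∑ x ∈ N, f v x = -∑ x ∈ N, f x u := by
      rw [← Finset.sum_neg_distrib]
      refine Finset.sum_congr rfl (fun x hx => ?_)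
      rw [hskew v x, hcv x (hNu x hx) (hNv x hx)]
    rw [h2] at this
    linear_combination this
  have h4 : f u v = -(f u v) := calc
    f u v = ∑ x ∈ N, f x u := hEu
    _ = f v u := hEv.symm
    _ = -(f u v) := hskew v u
  exact hne u v (hubu v huv.symm) (z3_self_neg _ h4)

/-- for odd `k ≥ 3`, neither `(k, 3^k)` nor `(k², 3^{k-1})` has a
`Z₃`-connected realization. -/
theorem no_Z3_realization_k_3k (k : ℕ) (hk : 3 ≤ k) (hodd : Odd k) :
    (¬ ∃ G : SimpleGraph (Fin (k + 1)),
        degSeq G (fun i => if (i : ℕ) = 0 then k else 3) ∧ G.Z3Conn) ∧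
    (¬ ∃ G : SimpleGraph (Fin (k + 1)),
        degSeq G (fun i => if (i : ℕ) < 2 then k else 3) ∧ G.Z3Conn) := by
  constructor
  · rintro ⟨G, ⟨σ, hσ⟩, hZ⟩
    letI : DecidableRel G.Adj := Classical.decRel _
    refine no_Z3_realization_k_3k' k hk hodd G ⟨⟨σ, fun i => ?_⟩, hZ⟩
    rw [show G.degree (σ i) = (G.neighborSet (σ i)).ncard by
      rw [Set.ncard_eq_toFinset_card', SimpleGraph.degree, SimpleGraph.neighborFinset_def]]
    exact hσ i
  · rintro ⟨G, ⟨σ, hσ⟩, hZ⟩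
    letI : DecidableRel G.Adj := Classical.decRel _
    refine no_Z3_part2 k hk hodd G ⟨⟨σ, fun i => ?_⟩, hZ⟩
    rw [show G.degree (σ i) = (G.neighborSet (σ i)).ncard by
      rw [Set.ncard_eq_toFinset_card', SimpleGraph.degree, SimpleGraph.neighborFinset_def]]
    exact hσ i
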